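/- For any two probability measures P and Q on a finite type, and any real-valued function T, the expectation of T under P minus the logarithm of the expectation of exp(T) under Q is at most the Kullback-Leibler divergence KL(P || Q). That is, E_P[T] - log E_Q[exp(T)] <= KL(P || Q). -/

import Mathlib

open Finset Real

/-- Donsker–Varadhan lower bound (MINE, Eq. 3): for probability mass functions
`P`, `Q` on a finite type with `P ≪ Q`, and any function `T`,
`E_P[T] - log E_Q[exp T] ≤ KL(P ‖ Q)` where
`KL(P ‖ Q) = ∑ x, P x * log (P x / Q x)`. -/
theorem stmt_2 {α : Type*} [Fintype α] (P Q : α → ℝ)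
    (hP0 : ∀ x, 0 ≤ P x) (hP1 : ∑ x, P x = 1)
    (hQ0 : ∀ x, 0 ≤ Q x) (hQ1 : ∑ x, Q x = 1)
    (hac : ∀ x, Q x = 0 → P x = 0)
    (T : α → ℝ) :
    (∑ x, P x * T x) - Real.log (∑ x, Q x * Real.exp (T x)) ≤
      ∑ x, P x * Real.log (P x / Q x) := by
  classical
  set s := Finset.univ.filter (fun x => P x ≠ 0) with hs
  have hPs : ∀ x ∈ s, 0 < P x := by
    intro x hx
    simp only [hs, Finset.mem_filter] at hx
    exact (hP0 x).lt_of_ne (Ne.symm hx.2)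
  have hQs : ∀ x ∈ s, 0 < Q x := by
    intro x hx
    rcases (hQ0 x).lt_or_eq with h | h
    · exact h
    · exact absurd (hac x h.symm) (by simpa [hs] using hx)
  have hsum1 : ∑ x ∈ s, P x = 1 := by
    rw [← hP1]
    exact Finset.sum_filter_ne_zero _
  -- Jensen
  have hJ : ∑ x ∈ s, P x • Real.log (Q x * Real.exp (T x) / P x) ≤
      Real.log (∑ x ∈ s, P x • (Q x * Real.exp (T x) / P x)) := by
    apply (strictConcaveOn_log_Ioi.concaveOn).le_map_sum
      (fun x hx => (hPs x hx).le) hsum1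
    intro x hx
    have h1 := hPs x hx
    have h2 := hQs x hx
    exact Set.mem_Ioi.mpr (by positivity)
  have hinner : ∑ x ∈ s, P x • (Q x * Real.exp (T x) / P x) =
      ∑ x ∈ s, Q x * Real.exp (T x) := by
    apply Finset.sum_congr rfl
    intro x hx
    have hp := (hPs x hx).ne'
    rw [smul_eq_mul]
    field_simp
  have hpos : 0 < ∑ x ∈ s, Q x * Real.exp (T x) := by
    have hne : s.Nonempty := by
      by_contra h
      rw [Finset.not_nonempty_iff_eq_empty] at h
      simp [h] at hsum1
    obtain ⟨x, hx⟩ := hne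
    refine Finset.sum_pos' (fun y _ => ?_) ⟨x, hx, ?_⟩
    · have := hQ0 y; positivity
    · have := hQs x hx; positivity
  have hmono : Real.log (∑ x ∈ s, Q x * Real.exp (T x)) ≤
      Real.log (∑ x, Q x * Real.exp (T x)) := by
    apply Real.log_le_log hpos
    apply Finset.sum_le_sum_of_subset_of_nonneg (Finset.subset_univ s)
    intro y _ _
    have := hQ0 y
    positivity
  -- rewrite log term
  have hterm : ∀ x ∈ s, P x * Real.log (Q x * Real.exp (T x) / P x) =
      P x * T x - P x * Real.log (P x / Q x) := by
    intro x hx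
    have hp := hPs x hx
    have hq := hQs x hx
    rw [Real.log_div (by positivity) hp.ne', Real.log_mul hq.ne' (Real.exp_ne_zero _),
      Real.log_exp, Real.log_div hp.ne' hq.ne']
    ring
  have key : ∑ x ∈ s, (P x * T x - P x * Real.log (P x / Q x)) ≤
      Real.log (∑ x, Q x * Real.exp (T x)) := by
    calc ∑ x ∈ s, (P x * T x - P x * Real.log (P x / Q x))
        = ∑ x ∈ s, P x • Real.log (Q x * Real.exp (T x) / P x) := by
          apply Finset.sum_congr rfl
          intro x hx
          rw [smul_eq_mul, hterm x hx]
      _ ≤ Real.log (∑ x ∈ s, P x • (Q x * Real.exp (T x) / P x)) := hJ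
      _ = Real.log (∑ x ∈ s, Q x * Real.exp (T x)) := by rw [hinner]
      _ ≤ Real.log (∑ x, Q x * Real.exp (T x)) := hmono
  have h1 : ∑ x, P x * T x = ∑ x ∈ s, P x * T x := by
    rw [Finset.sum_filter_of_ne]
    intro x _ h
    by_contra hp
    exact h (by simp [hp])
  have h2 : ∑ x, P x * Real.log (P x / Q x) = ∑ x ∈ s, P x * Real.log (P x / Q x) := by
    rw [Finset.sum_filter_of_ne]
    intro x _ h
    by_contra hp
    exact h (by simp [hp])
  rw [h1, h2]
  have := key
  rw [Finset.sum_sub_distrib] at this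
  linarith
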